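/- Let A and B be two m×n real matrices, k = min(m,n). Let λ_1 ≥ … ≥ λ_k and τ_1 ≥ … ≥ τ_k be the singular values of A and B respectively (in decreasing order with multiplicity), and let δ_1, …, δ_k be the singular values of A − B. Then max_{1≤i≤k} |λ_i − τ_i| ≤ max_{1≤i≤k} |δ_i| = ‖A − B‖, the spectral norm of A − B. -/

import Mathlib

open scoped RealInnerProductSpace

/-- The spectral norm (ℓ2 → ℓ2 operator norm) of a real matrix. -/
noncomputable def specNorm {m n : ℕ} (M : Matrix (Fin m) (Fin n) ℝ) : ℝ :=
  ‖(Matrix.toEuclideanLin M).toContinuousLinearMap‖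

namespace WeylAux

variable {m n k : ℕ}

/-- Package a raw family into Euclidean space. -/
noncomputable def ev {n : ℕ} (y : Fin k → Fin n → ℝ) (i : Fin k) : EuclideanSpace ℝ (Fin n) :=
  (WithLp.equiv 2 (Fin n → ℝ)).symm (y i)

lemma ortho_of_ite {n : ℕ} {y : Fin k → Fin n → ℝ}
    (hy : ∀ i i', ∑ b, y i b * y i' b = if i = i' then (1:ℝ) else 0) :
    Orthonormal ℝ (ev y) := by
  rw [orthonormal_iff_ite]
  intro i j
  simpa [ev, PiLp.inner_apply, RCLike.inner_apply, conj_trivial, mul_comm] using hy i j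

lemma rep_apply {M : Matrix (Fin m) (Fin n) ℝ} {s : Fin k → ℝ}
    {x : Fin k → Fin m → ℝ} {y : Fin k → Fin n → ℝ}
    (hM : ∀ a b, M a b = ∑ i, s i * x i a * y i b)
    (v : EuclideanSpace ℝ (Fin n)) :
    Matrix.toEuclideanLin M v = ∑ i, (s i * ⟪ev y i, v⟫) • ev x i := by
  apply (WithLp.equiv 2 (Fin m → ℝ)).injective
  have hL : (WithLp.equiv 2 (Fin m → ℝ)) (Matrix.toEuclideanLin M v)
      = fun a => ∑ b, M a b * v b := by
    funext a
    simp [Matrix.toEuclideanLin_apply, Matrix.mulVec, dotProduct]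
  have hR : (WithLp.equiv 2 (Fin m → ℝ)) (∑ i, (s i * ⟪ev y i, v⟫) • ev x i)
      = ∑ i, (s i * ⟪ev y i, v⟫) • x i := by
    have h1 := map_sum (WithLp.linearEquiv 2 ℝ (Fin m → ℝ))
      (fun i => (s i * ⟪ev y i, v⟫) • ev x i) Finset.univ
    simp only [map_smul] at h1
    exact h1
  rw [hL, hR]
  funext a
  rw [Finset.sum_apply]
  simp only [Pi.smul_apply, smul_eq_mul, PiLp.inner_apply, RCLike.inner_apply, conj_trivial, ev,
    WithLp.equiv_symm_apply, WithLp.ofLp_toLp, hM, Finset.sum_mul]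
  rw [Finset.sum_comm]
  refine Finset.sum_congr rfl fun i _ => ?_
  rw [Finset.mul_sum, Finset.sum_mul]
  refine Finset.sum_congr rfl fun b _ => by ring

lemma norm_sq_sum_smul {X : Fin k → EuclideanSpace ℝ (Fin m)} (hX : Orthonormal ℝ X)
    (c : Fin k → ℝ) : ‖∑ i, c i • X i‖ ^ 2 = ∑ i, (c i) ^ 2 := by
  rw [← real_inner_self_eq_norm_sq, sum_inner]
  refine Finset.sum_congr rfl fun i _ => ?_
  rw [real_inner_smul_left, hX.inner_right_fintype c i]
  ring

lemma norm_sq_apply {M : Matrix (Fin m) (Fin n) ℝ} {s : Fin k → ℝ}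
    {x : Fin k → Fin m → ℝ} {y : Fin k → Fin n → ℝ}
    (hM : ∀ a b, M a b = ∑ i, s i * x i a * y i b)
    (hx : ∀ i i', ∑ a, x i a * x i' a = if i = i' then (1:ℝ) else 0)
    (v : EuclideanSpace ℝ (Fin n)) :
    ‖Matrix.toEuclideanLin M v‖ ^ 2 = ∑ i, (s i * ⟪ev y i, v⟫) ^ 2 := by
  rw [rep_apply hM v, norm_sq_sum_smul (ortho_of_ite hx)]

lemma opNorm_le {M : Matrix (Fin m) (Fin n) ℝ} {s : Fin k → ℝ}
    {x : Fin k → Fin m → ℝ} {y : Fin k → Fin n → ℝ}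
    (hM : ∀ a b, M a b = ∑ i, s i * x i a * y i b)
    (hx : ∀ i i', ∑ a, x i a * x i' a = if i = i' then (1:ℝ) else 0)
    (hy : ∀ i i', ∑ b, y i b * y i' b = if i = i' then (1:ℝ) else 0)
    {C : ℝ} (hC : 0 ≤ C) (hs : ∀ i, |s i| ≤ C) :
    specNorm M ≤ C := by
  apply ContinuousLinearMap.opNorm_le_bound _ hC
  intro v
  rw [LinearMap.coe_toContinuousLinearMap']
  have h1 : ‖Matrix.toEuclideanLin M v‖ ^ 2 ≤ (C * ‖v‖) ^ 2 := by
    rw [norm_sq_apply hM hx v]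
    have bessel : ∑ i, ⟪ev y i, v⟫ ^ 2 ≤ ‖v‖ ^ 2 := by
      have := (ortho_of_ite hy).sum_inner_products_le v (s := Finset.univ)
      simpa [Real.norm_eq_abs, sq_abs] using this
    calc ∑ i, (s i * ⟪ev y i, v⟫) ^ 2 ≤ ∑ i, C ^ 2 * ⟪ev y i, v⟫ ^ 2 := by
          refine Finset.sum_le_sum fun i _ => ?_
          have h := abs_le.mp (hs i)
          have hsq2 : s i ^ 2 ≤ C ^ 2 := sq_le_sq' h.1 h.2
          rw [mul_pow]
          exact mul_le_mul_of_nonneg_right hsq2 (sq_nonneg _)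
      _ = C ^ 2 * ∑ i, ⟪ev y i, v⟫ ^ 2 := by rw [Finset.mul_sum]
      _ ≤ C ^ 2 * ‖v‖ ^ 2 := by nlinarith [sq_nonneg C]
      _ = (C * ‖v‖) ^ 2 := by ring
  have h2 := Real.sqrt_le_sqrt h1
  rwa [Real.sqrt_sq (norm_nonneg _), Real.sqrt_sq (by positivity)] at h2

lemma le_opNorm {M : Matrix (Fin m) (Fin n) ℝ} {s : Fin k → ℝ}
    {x : Fin k → Fin m → ℝ} {y : Fin k → Fin n → ℝ}
    (hM : ∀ a b, M a b = ∑ i, s i * x i a * y i b)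
    (hx : ∀ i i', ∑ a, x i a * x i' a = if i = i' then (1:ℝ) else 0)
    (hy : ∀ i i', ∑ b, y i b * y i' b = if i = i' then (1:ℝ) else 0)
    (j : Fin k) : |s j| ≤ specNorm M := by
  have hyn : ‖ev y j‖ = 1 := (ortho_of_ite hy).1 j
  have hxn : ‖ev x j‖ = 1 := (ortho_of_ite hx).1 j
  have happ : Matrix.toEuclideanLin M (ev y j) = s j • ev x j := by
    rw [rep_apply hM (ev y j)]
    have hinner : ∀ i, ⟪ev y i, ev y j⟫ = if i = j then (1:ℝ) else 0 := by
      intro i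
      simpa [ev, PiLp.inner_apply, RCLike.inner_apply, conj_trivial, mul_comm] using hy i j
    rw [Finset.sum_eq_single j]
    · rw [hinner j, if_pos rfl, mul_one]
    · intro i _ hij
      rw [hinner i, if_neg hij, mul_zero, zero_smul]
    · intro h; exact absurd (Finset.mem_univ j) h
  have := (Matrix.toEuclideanLin M).toContinuousLinearMap.le_opNorm (ev y j)
  rw [LinearMap.coe_toContinuousLinearMap', happ, norm_smul, hxn, hyn, mul_one, mul_one,
    Real.norm_eq_abs] at this
  exact this

/-- extension of a kernel vector of the truncated Gram matrix -/
lemma sum_extend {r : ℕ} (hr : r ≤ k) (f : Fin k → ℝ) (c : Fin r → ℝ) :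
    ∑ j : Fin k, (if h : j.1 < r then c ⟨j.1, h⟩ else 0) * f j
      = ∑ l : Fin r, c l * f (Fin.castLE hr l) := by
  rw [← Finset.sum_filter_of_ne (p := fun j => j.1 < r)]
  · rw [show Finset.filter (fun j : Fin k => j.1 < r) Finset.univ
        = Finset.image (Fin.castLE hr) Finset.univ from ?_]
    · rw [Finset.sum_image (fun a _ b _ hab => Fin.castLE_injective hr hab)]
      refine Finset.sum_congr rfl fun l _ => ?_
      simp [Fin.castLE]
    · ext j
      simp only [Finset.mem_filter, Finset.mem_univ, true_and, Finset.mem_image]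
      constructor
      · intro hj; exact ⟨⟨j.1, hj⟩, by simp [Fin.castLE]⟩
      · rintro ⟨l, rfl⟩; exact l.isLt
  · intro j _ hj
    by_contra hcon
    push_neg at hcon
    rw [dif_neg (by omega), zero_mul] at hj
    exact hj rfl

set_option maxHeartbeats 2000000 in
/-- Core one-sided Weyl inequality. -/
lemma core (A B : Matrix (Fin m) (Fin n) ℝ)
    (lam τ : Fin k → ℝ)
    (xA : Fin k → Fin m → ℝ) (yA : Fin k → Fin n → ℝ)
    (xB : Fin k → Fin m → ℝ) (yB : Fin k → Fin n → ℝ)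
    (hlam0 : ∀ i, 0 ≤ lam i) (hτ0 : ∀ i, 0 ≤ τ i)
    (hlam_mono : ∀ i j : Fin k, i ≤ j → lam j ≤ lam i)
    (hτ_mono : ∀ i j : Fin k, i ≤ j → τ j ≤ τ i)
    (hxA : ∀ i i', ∑ a, xA i a * xA i' a = if i = i' then (1:ℝ) else 0)
    (hyA : ∀ i i', ∑ b, yA i b * yA i' b = if i = i' then (1:ℝ) else 0)
    (hxB : ∀ i i', ∑ a, xB i a * xB i' a = if i = i' then (1:ℝ) else 0)
    (hyB : ∀ i i', ∑ b, yB i b * yB i' b = if i = i' then (1:ℝ) else 0)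
    (hA : ∀ a b, A a b = ∑ i, lam i * xA i a * yA i b)
    (hB : ∀ a b, B a b = ∑ i, τ i * xB i a * yB i b)
    (i : Fin k) : lam i - τ i ≤ specNorm (A - B) := by
  classical
  set i0 := (i : ℕ) with hi0
  have hi0k : i0 + 1 ≤ k := i.isLt
  -- Gram matrix of the constraints
  set jB : Fin i0 → Fin k := fun j' => ⟨j'.1, j'.isLt.trans i.isLt⟩ with hjB
  set G : Matrix (Fin i0) (Fin (i0 + 1)) ℝ :=
    fun j' l => ⟪ev yB (jB j'), ev yA (Fin.castLE hi0k l)⟫ with hG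
  -- a nonzero kernel vector of `G`
  have hni : ¬ Function.Injective G.mulVecLin := by
    intro h
    have h2 := LinearMap.finrank_le_finrank_of_injective h
    simp [Module.finrank_pi] at h2
  obtain ⟨c1, c2, hce, hne⟩ := Function.not_injective_iff.mp hni
  set c : Fin (i0 + 1) → ℝ := c1 - c2 with hc
  have hc0 : c ≠ 0 := sub_ne_zero.mpr hne
  have hker : Matrix.mulVec G c = 0 := by
    have : G.mulVecLin (c1 - c2) = 0 := by rw [map_sub, hce, sub_self]
    simpa [Matrix.mulVecLin_apply] using this
  set c' : Fin k → ℝ := fun j => if h : j.1 < i0 + 1 then c ⟨j.1, h⟩ else 0 with hc'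
  set w : EuclideanSpace ℝ (Fin n) := ∑ j, c' j • ev yA j with hw
  have hwinA : ∀ j, ⟪ev yA j, w⟫ = c' j := fun j =>
    (ortho_of_ite hyA).inner_right_fintype c' j
  have hwsq : ‖w‖ ^ 2 = ∑ j, c' j ^ 2 := norm_sq_sum_smul (ortho_of_ite hyA) c'
  have hcsum : ∑ j, c' j ^ 2 = ∑ l, c l ^ 2 := by
    have := sum_extend hi0k c' c
    simp only [hc'] at this ⊢
    calc ∑ j : Fin k, (if h : j.1 < i0 + 1 then c ⟨j.1, h⟩ else 0) ^ 2
        = ∑ j : Fin k, (if h : j.1 < i0 + 1 then c ⟨j.1, h⟩ else 0) *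
            (if h : j.1 < i0 + 1 then c ⟨j.1, h⟩ else 0) := by
          refine Finset.sum_congr rfl fun j _ => by rw [sq]
      _ = ∑ l, c l * (if h : (Fin.castLE hi0k l).1 < i0 + 1 then c ⟨(Fin.castLE hi0k l).1, h⟩ else 0) :=
          sum_extend hi0k _ c
      _ = ∑ l, c l ^ 2 := by
          refine Finset.sum_congr rfl fun l _ => ?_
          have h4 : (if h : ((Fin.castLE hi0k l) : ℕ) < i0 + 1
              then c ⟨((Fin.castLE hi0k l) : ℕ), h⟩ else 0) = c l := dif_pos l.isLt
          rw [h4, sq]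
  have hwpos : 0 < ‖w‖ := by
    obtain ⟨l, hl⟩ := Function.ne_iff.mp hc0
    have hpos : 0 < ∑ l, c l ^ 2 := by
      apply Finset.sum_pos' (fun t _ => sq_nonneg _) ⟨l, Finset.mem_univ _, lt_of_le_of_ne (sq_nonneg _) (Ne.symm (pow_ne_zero 2 hl))⟩
    have : 0 < ‖w‖ ^ 2 := by rw [hwsq, hcsum]; exact hpos
    nlinarith [norm_nonneg w]
  have hBin : ∀ j' : Fin i0, ⟪ev yB (jB j'), w⟫ = 0 := by
    intro j'
    have h1 : ⟪ev yB (jB j'), w⟫ = ∑ j, c' j * ⟪ev yB (jB j'), ev yA j⟫ := by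
      rw [hw, inner_sum]
      exact Finset.sum_congr rfl fun j _ => real_inner_smul_right _ _ _
    rw [h1, sum_extend hi0k (fun j => ⟪ev yB (jB j'), ev yA j⟫) c]
    have h2 := congrFun hker j'
    simp only [Matrix.mulVec, dotProduct, hG, Pi.zero_apply] at h2
    rw [← h2]
    exact Finset.sum_congr rfl fun l _ => by ring
  -- lower bound for ‖A w‖
  have hAsq : ‖Matrix.toEuclideanLin A w‖ ^ 2 = ∑ j, (lam j * c' j) ^ 2 := by
    rw [norm_sq_apply hA hxA w]
    exact Finset.sum_congr rfl fun j _ => by rw [hwinA j]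
  have hAlow : (lam i * ‖w‖) ^ 2 ≤ ‖Matrix.toEuclideanLin A w‖ ^ 2 := by
    rw [hAsq, mul_pow, hwsq, Finset.mul_sum]
    refine Finset.sum_le_sum fun j _ => ?_
    by_cases hcj : c' j = 0
    · simp [hcj]
    · have hj : j ≤ i := by
        by_contra hcon
        have : ¬ (j.1 < i0 + 1) := by
          simp only [Fin.le_def, not_le] at hcon
          omega
        exact hcj (by rw [hc']; exact dif_neg this)
      have hlam : lam i ≤ lam j := hlam_mono j i hj
      have : lam i ^ 2 ≤ lam j ^ 2 := by nlinarith [hlam0 i]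
      rw [mul_pow]
      exact mul_le_mul_of_nonneg_right this (sq_nonneg _)
  have hAlow' : lam i * ‖w‖ ≤ ‖Matrix.toEuclideanLin A w‖ := by
    have h2 := Real.sqrt_le_sqrt hAlow
    rwa [Real.sqrt_sq (mul_nonneg (hlam0 i) (norm_nonneg _)),
      Real.sqrt_sq (norm_nonneg _)] at h2
  -- upper bound for ‖B w‖
  have hBsq : ‖Matrix.toEuclideanLin B w‖ ^ 2 = ∑ j, (τ j * ⟪ev yB j, w⟫) ^ 2 :=
    norm_sq_apply hB hxB w
  have hBhigh : ‖Matrix.toEuclideanLin B w‖ ^ 2 ≤ (τ i * ‖w‖) ^ 2 := by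
    rw [hBsq]
    have step : ∀ j, (τ j * ⟪ev yB j, w⟫) ^ 2 ≤ τ i ^ 2 * ⟪ev yB j, w⟫ ^ 2 := by
      intro j
      by_cases hj : j.1 < i0
      · have : ⟪ev yB j, w⟫ = 0 := by
          have := hBin ⟨j.1, hj⟩
          have hjeq : jB ⟨j.1, hj⟩ = j := by rw [hjB]
          rwa [hjeq] at this
        simp [this]
      · have hij : i ≤ j := by
          rw [Fin.le_def]; omega
        have hτle : τ j ≤ τ i := hτ_mono i j hij
        have : τ j ^ 2 ≤ τ i ^ 2 := by nlinarith [hτ0 j]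
        rw [mul_pow]
        exact mul_le_mul_of_nonneg_right this (sq_nonneg _)
    calc ∑ j, (τ j * ⟪ev yB j, w⟫) ^ 2 ≤ ∑ j, τ i ^ 2 * ⟪ev yB j, w⟫ ^ 2 :=
          Finset.sum_le_sum fun j _ => step j
      _ = τ i ^ 2 * ∑ j, ⟪ev yB j, w⟫ ^ 2 := by rw [Finset.mul_sum]
      _ ≤ τ i ^ 2 * ‖w‖ ^ 2 := by
          have bessel : ∑ j, ⟪ev yB j, w⟫ ^ 2 ≤ ‖w‖ ^ 2 := by
            have := (ortho_of_ite hyB).sum_inner_products_le w (s := Finset.univ)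
            simpa [Real.norm_eq_abs, sq_abs] using this
          nlinarith [sq_nonneg (τ i)]
      _ = (τ i * ‖w‖) ^ 2 := by ring
  have hBhigh' : ‖Matrix.toEuclideanLin B w‖ ≤ τ i * ‖w‖ := by
    have h2 := Real.sqrt_le_sqrt hBhigh
    rwa [Real.sqrt_sq (norm_nonneg _),
      Real.sqrt_sq (mul_nonneg (hτ0 i) (norm_nonneg _))] at h2
  -- triangle inequality
  have hsub : Matrix.toEuclideanLin (A - B) w
      = Matrix.toEuclideanLin A w - Matrix.toEuclideanLin B w := by
    rw [map_sub]; rfl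
  have hd : ‖Matrix.toEuclideanLin (A - B) w‖ ≤ specNorm (A - B) * ‖w‖ := by
    have := (Matrix.toEuclideanLin (A - B)).toContinuousLinearMap.le_opNorm w
    rwa [LinearMap.coe_toContinuousLinearMap'] at this
  have htri : ‖Matrix.toEuclideanLin A w‖ ≤ ‖Matrix.toEuclideanLin B w‖
      + ‖Matrix.toEuclideanLin (A - B) w‖ := by
    calc ‖Matrix.toEuclideanLin A w‖
        = ‖Matrix.toEuclideanLin B w + Matrix.toEuclideanLin (A - B) w‖ := by
          rw [hsub]; congr 1; abel
      _ ≤ _ := norm_add_le _ _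
  have hfin : lam i * ‖w‖ ≤ τ i * ‖w‖ + specNorm (A - B) * ‖w‖ := by
    calc lam i * ‖w‖ ≤ ‖Matrix.toEuclideanLin A w‖ := hAlow'
      _ ≤ ‖Matrix.toEuclideanLin B w‖ + ‖Matrix.toEuclideanLin (A - B) w‖ := htri
      _ ≤ τ i * ‖w‖ + specNorm (A - B) * ‖w‖ := add_le_add hBhigh' hd
  nlinarith [hwpos]



lemma specNorm_swap {m n : ℕ} (A B : Matrix (Fin m) (Fin n) ℝ) :
    specNorm (B - A) = specNorm (A - B) := by
  unfold specNorm
  rw [show B - A = -(A - B) from (neg_sub A B).symm, map_neg, map_neg, norm_neg]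

end WeylAux

/-- **Weyl's inequality for singular values.** -/
theorem weyl_singular_value_perturbation
    (m n : ℕ) (A B : Matrix (Fin m) (Fin n) ℝ)
    (k : ℕ) (hk : k = min m n) (hk0 : 0 < k)
    (lam τ δ : Fin k → ℝ)
    (xA : Fin k → Fin m → ℝ) (yA : Fin k → Fin n → ℝ)
    (xB : Fin k → Fin m → ℝ) (yB : Fin k → Fin n → ℝ)
    (xD : Fin k → Fin m → ℝ) (yD : Fin k → Fin n → ℝ)
    (hlam0 : ∀ i, 0 ≤ lam i) (hτ0 : ∀ i, 0 ≤ τ i) (hδ0 : ∀ i, 0 ≤ δ i)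
    (hlam_mono : ∀ i j : Fin k, i ≤ j → lam j ≤ lam i)
    (hτ_mono : ∀ i j : Fin k, i ≤ j → τ j ≤ τ i)
    (hxA : ∀ i i', ∑ a, xA i a * xA i' a = if i = i' then (1:ℝ) else 0)
    (hyA : ∀ i i', ∑ b, yA i b * yA i' b = if i = i' then (1:ℝ) else 0)
    (hxB : ∀ i i', ∑ a, xB i a * xB i' a = if i = i' then (1:ℝ) else 0)
    (hyB : ∀ i i', ∑ b, yB i b * yB i' b = if i = i' then (1:ℝ) else 0)
    (hxD : ∀ i i', ∑ a, xD i a * xD i' a = if i = i' then (1:ℝ) else 0)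
    (hyD : ∀ i i', ∑ b, yD i b * yD i' b = if i = i' then (1:ℝ) else 0)
    (hA : ∀ a b, A a b = ∑ i, lam i * xA i a * yA i b)
    (hB : ∀ a b, B a b = ∑ i, τ i * xB i a * yB i b)
    (hD : ∀ a b, A a b - B a b = ∑ i, δ i * xD i a * yD i b) :
    (∀ i : Fin k, |lam i - τ i| ≤
        Finset.univ.sup' (Finset.univ_nonempty_iff.mpr ⟨⟨0, hk0⟩⟩) fun i' => |δ i'|) ∧
    (Finset.univ.sup' (Finset.univ_nonempty_iff.mpr ⟨⟨0, hk0⟩⟩) fun i' => |δ i'|)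
      = specNorm (A - B) := by
  have hD' : ∀ a b, (A - B) a b = ∑ i, δ i * xD i a * yD i b := by
    intro a b; rw [Matrix.sub_apply]; exact hD a b
  set S : ℝ := Finset.univ.sup' (Finset.univ_nonempty_iff.mpr ⟨⟨0, hk0⟩⟩) fun i' => |δ i'| with hS
  have hle : ∀ i, |δ i| ≤ S := fun i => Finset.le_sup' (fun i' => |δ i'|) (Finset.mem_univ i)
  have hS0 : 0 ≤ S := le_trans (abs_nonneg _) (hle ⟨0, hk0⟩)
  have hSN : S = specNorm (A - B) := by
    apply le_antisymm
    · exact Finset.sup'_le _ _ fun j _ => WeylAux.le_opNorm hD' hxD hyD j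
    · exact WeylAux.opNorm_le hD' hxD hyD hS0 hle
  refine ⟨fun i => ?_, hSN⟩
  rw [abs_sub_le_iff, hSN]
  constructor
  · exact WeylAux.core A B lam τ xA yA xB yB hlam0 hτ0 hlam_mono hτ_mono
      hxA hyA hxB hyB hA hB i
  · rw [← WeylAux.specNorm_swap A B]
    exact WeylAux.core B A τ lam xB yB xA yA hτ0 hlam0 hτ_mono hlam_mono
      hxB hyB hxA hyA hB hA i
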